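/- arXiv:2110.13060 — 7 statements merged into one kernel-verified Lean document; each statement's English description precedes it below -/
import Mathlib

section
/- For any two deterministic time-dependent policies π and π' on a finite-horizon MDP and any initial state s_1 ∈ S, the performance difference identity holds: V^{π'}_1(s_1) − V^{π}_1(s_1) = ∑_{t=1}^{H} ∑_{s∈S} d^{π}_t(s)·(V^{π'}_t(s) − Q^{π'}_t(s, π_t(s))). -/
/-- **Performance difference identity.** For any two deterministic time-dependent
policies `π` and `π'` on a finite-horizon MDP and any initial state `s₁`,
`V^{π'}_1(s₁) − V^{π}_1(s₁) = ∑_{t=1}^{H} ∑_{s} d^{π}_t(s) · (V^{π'}_t(s) − Q^{π'}_t(s, π_t(s)))`.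
The value functions of each policy are characterized by the backward Bellman recursion,
and `d` is the state-occupancy distribution of `π` started at `s₁`. -/
theorem performance_difference
    {S A : Type*} [Fintype S] [Fintype A] [DecidableEq S]
    (P : S → A → S → ℝ) (R : S → A → ℝ) (H : ℕ)
    (hP0 : ∀ s a s', 0 ≤ P s a s')
    (hP1 : ∀ s a, ∑ s' : S, P s a s' = 1)
    (hR0 : ∀ s a, 0 ≤ R s a) (hR1 : ∀ s a, R s a ≤ 1)
    (π π' : ℕ → S → A)
    (Q : ℕ → S → A → ℝ) (V : ℕ → S → ℝ)
    (Q' : ℕ → S → A → ℝ) (V' : ℕ → S → ℝ)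
    (hVend : ∀ s, V (H + 1) s = 0)
    (hQ : ∀ t ∈ Finset.Icc 1 H, ∀ s a,
      Q t s a = R s a + ∑ s' : S, P s a s' * V (t + 1) s')
    (hV : ∀ t ∈ Finset.Icc 1 H, ∀ s, V t s = Q t s (π t s))
    (hV'end : ∀ s, V' (H + 1) s = 0)
    (hQ' : ∀ t ∈ Finset.Icc 1 H, ∀ s a,
      Q' t s a = R s a + ∑ s' : S, P s a s' * V' (t + 1) s')
    (hV' : ∀ t ∈ Finset.Icc 1 H, ∀ s, V' t s = Q' t s (π' t s))
    (s₁ : S) (d : ℕ → S → ℝ)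
    (hd1 : ∀ s, d 1 s = if s = s₁ then 1 else 0)
    (hd : ∀ t ∈ Finset.Icc 1 (H - 1), ∀ s',
      d (t + 1) s' = ∑ s : S, d t s * P s (π t s) s') :
    V' 1 s₁ - V 1 s₁ =
      ∑ t ∈ Finset.Icc 1 H, ∑ s : S, d t s * (V' t s - Q' t s (π t s)) := by

  have hQdiff : ∀ t ∈ Finset.Icc 1 H, ∀ s a,
      Q' t s a - Q t s a = ∑ s' : S, P s a s' * (V' (t + 1) s' - V (t + 1) s') := by
    intro t ht s a
    rw [hQ' t ht s a, hQ t ht s a]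
    simp only [mul_sub, Finset.sum_sub_distrib]
    ring
  have key : ∀ n : ℕ, ∀ t : ℕ, 1 ≤ t → t + n = H →
      ∑ s : S, d t s * (V' t s - V t s)
        = ∑ u ∈ Finset.Icc t H, ∑ s : S, d u s * (V' u s - Q' u s (π u s)) := by
    intro n
    induction n with
    | zero =>
      intro t ht1 htH
      simp only [Nat.add_zero] at htH
      subst htH
      rw [Finset.Icc_self, Finset.sum_singleton]
      apply Finset.sum_congr rfl
      intro s _
      have hmem : t ∈ Finset.Icc 1 t := by simp [ht1]
      have hdq : Q' t s (π t s) - Q t s (π t s) = 0 := by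
        rw [hQdiff t hmem s (π t s)]
        simp [hVend, hV'end]
      have hVeq : V t s = Q t s (π t s) := hV t hmem s
      have : Q t s (π t s) = Q' t s (π t s) := by linarith
      rw [hVeq, this]
    | succ n ih =>
      intro t ht1 htH
      have htH' : t + 1 + n = H := by omega
      have htmem : t ∈ Finset.Icc 1 H := by simp; omega
      have htmem' : t ∈ Finset.Icc 1 (H - 1) := by simp; omega
      have hIcc : Finset.Icc t H = insert t (Finset.Icc (t + 1) H) := by
        ext x; simp only [Finset.mem_Icc, Finset.mem_insert]; omega
      calc ∑ s : S, d t s * (V' t s - V t s)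
          = ∑ s : S, d t s * (V' t s - Q' t s (π t s))
            + ∑ s : S, d t s * (Q' t s (π t s) - Q t s (π t s)) := by
            rw [← Finset.sum_add_distrib]
            apply Finset.sum_congr rfl; intro s _
            rw [hV t htmem s]; ring
        _ = ∑ s : S, d t s * (V' t s - Q' t s (π t s))
            + ∑ s' : S, d (t + 1) s' * (V' (t + 1) s' - V (t + 1) s') := by
            congr 1
            have h2 : ∀ s : S, d t s * (Q' t s (π t s) - Q t s (π t s))
                = ∑ s' : S, d t s * (P s (π t s) s' * (V' (t + 1) s' - V (t + 1) s')) := by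
              intro s
              rw [hQdiff t htmem s (π t s), Finset.mul_sum]
            rw [Finset.sum_congr rfl (fun s _ => h2 s), Finset.sum_comm]
            apply Finset.sum_congr rfl; intro s' _
            rw [hd t htmem' s', Finset.sum_mul]
            apply Finset.sum_congr rfl; intro s _; ring
        _ = ∑ u ∈ Finset.Icc t H, ∑ s : S, d u s * (V' u s - Q' u s (π u s)) := by
            rw [ih (t + 1) (by omega) htH', hIcc, Finset.sum_insert (by simp)]
  rcases Nat.eq_zero_or_pos H with hH | hH
  · subst hH
    have h1 : V 1 s₁ = 0 := hVend s₁
    have h2 : V' 1 s₁ = 0 := hV'end s₁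
    simp [h1, h2]
  · have := key (H - 1) 1 le_rfl (by omega)
    rw [← this]
    simp [hd1, Finset.sum_ite_eq', mul_comm]
end

section
/- Suppose the confidence condition holds. Then for every deterministic time-dependent policy π, every t ∈ {1,…,H}, and all (s,a) ∈ S × A, the pessimistic evaluation is a lower bound on the true Q-function: Q̄^π_t(s,a) ≤ Q^π_t(s,a), and consequently V̄^π_t(s) ≤ V^π_t(s) for all t ∈ {1,…,H+1} and s ∈ S. -/
/-- Under the confidence condition, the pessimistic policy evaluation (value iteration
for policy evaluation with reward `R̂ − b` and estimated transitions `P̂`) is a lower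
bound on the true Q-function of the policy: `Q̄^π_t(s,a) ≤ Q^π_t(s,a)` for all
`t ∈ {1,…,H}` and `(s,a)`, and consequently `V̄^π_t(s) ≤ V^π_t(s)` for all
`t ∈ {1,…,H+1}` and `s`. -/
theorem pessimistic_evaluation_lower_bound
    {S A : Type*} [Fintype S] [Fintype A]
    (P : S → A → S → ℝ) (R : S → A → ℝ) (H : ℕ)
    (hP0 : ∀ s a s', 0 ≤ P s a s')
    (hP1 : ∀ s a, ∑ s' : S, P s a s' = 1)
    (hR0 : ∀ s a, 0 ≤ R s a) (hR1 : ∀ s a, R s a ≤ 1)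
    (Phat : S → A → S → ℝ)
    (hPhat0 : ∀ s a s', 0 ≤ Phat s a s')
    (hPhat1 : ∀ s a, ∑ s' : S, Phat s a s' = 1)
    (Rhat : S → A → ℝ) (b : S → A → ℝ)
    (hconf : ∀ s a,
      |Rhat s a - R s a| + H * ∑ s' : S, |Phat s a s' - P s a s'| ≤ b s a)
    (π : ℕ → S → A)
    (Q : ℕ → S → A → ℝ) (V : ℕ → S → ℝ)
    (hVend : ∀ s, V (H + 1) s = 0)
    (hQ : ∀ t ∈ Finset.Icc 1 H, ∀ s a,
      Q t s a = R s a + ∑ s' : S, P s a s' * V (t + 1) s')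
    (hV : ∀ t ∈ Finset.Icc 1 H, ∀ s, V t s = Q t s (π t s))
    (Qbar : ℕ → S → A → ℝ) (Vbar : ℕ → S → ℝ)
    (hVbarEnd : ∀ s, Vbar (H + 1) s = 0)
    (hQbar : ∀ t ∈ Finset.Icc 1 H, ∀ s a,
      Qbar t s a = Rhat s a - b s a + ∑ s' : S, Phat s a s' * Vbar (t + 1) s')
    (hVbar : ∀ t ∈ Finset.Icc 1 H, ∀ s, Vbar t s = Qbar t s (π t s)) :
    (∀ t ∈ Finset.Icc 1 H, ∀ s a, Qbar t s a ≤ Q t s a) ∧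
      (∀ t ∈ Finset.Icc 1 (H + 1), ∀ s, Vbar t s ≤ V t s) := by

  have hQgen : ∀ t, t ∈ Finset.Icc 1 H →
      (∀ s, 0 ≤ V (t+1) s) → (∀ s, V (t+1) s ≤ (H:ℝ)) →
      (∀ s, Vbar (t+1) s ≤ V (t+1) s) → ∀ s a, Qbar t s a ≤ Q t s a := by
    intro t htmem hV0 hVH hVle s a
    rw [hQbar t htmem, hQ t htmem]
    have h1 : ∑ s' : S, Phat s a s' * Vbar (t+1) s' ≤ ∑ s' : S, Phat s a s' * V (t+1) s' :=
      Finset.sum_le_sum fun s' _ => mul_le_mul_of_nonneg_left (hVle s') (hPhat0 s a s')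
    have h2 : ∑ s' : S, Phat s a s' * V (t+1) s' - ∑ s' : S, P s a s' * V (t+1) s'
        ≤ H * ∑ s' : S, |Phat s a s' - P s a s'| := by
      rw [← Finset.sum_sub_distrib, Finset.mul_sum]
      refine Finset.sum_le_sum fun s' _ => ?_
      have he : Phat s a s' * V (t+1) s' - P s a s' * V (t+1) s'
          = (Phat s a s' - P s a s') * V (t+1) s' := by ring
      rw [he]
      calc (Phat s a s' - P s a s') * V (t+1) s'
          ≤ |Phat s a s' - P s a s'| * V (t+1) s' :=
            mul_le_mul_of_nonneg_right (le_abs_self _) (hV0 s')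
        _ ≤ |Phat s a s' - P s a s'| * H :=
            mul_le_mul_of_nonneg_left (hVH s') (abs_nonneg _)
        _ = H * |Phat s a s' - P s a s'| := mul_comm _ _
    have h3 : Rhat s a - R s a ≤ |Rhat s a - R s a| := le_abs_self _
    have hc := hconf s a
    linarith
  have key : ∀ n : ℕ, ∀ t : ℕ, t + n = H + 1 → 1 ≤ t →
      (∀ s, 0 ≤ V t s ∧ V t s ≤ (n : ℝ)) ∧ (∀ s, Vbar t s ≤ V t s) := by
    intro n
    induction n with
    | zero =>
      intro t ht _
      have htH : t = H + 1 := by omega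
      subst htH
      exact ⟨fun s => by simp [hVend], fun s => by simp [hVend, hVbarEnd]⟩
    | succ n ih =>
      intro t ht h1t
      have htmem : t ∈ Finset.Icc 1 H := Finset.mem_Icc.mpr ⟨h1t, by omega⟩
      obtain ⟨hVb, hVle⟩ := ih (t + 1) (by omega) (by omega)
      have hnH : (n : ℝ) ≤ (H : ℝ) := by exact_mod_cast Nat.cast_le.mpr (by omega)
      have hQle : ∀ s a, Qbar t s a ≤ Q t s a :=
        hQgen t htmem (fun s => (hVb s).1) (fun s => le_trans (hVb s).2 hnH) hVle
      refine ⟨fun s => ?_, fun s => ?_⟩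
      · rw [hV t htmem, hQ t htmem]
        constructor
        · have : (0:ℝ) ≤ ∑ s' : S, P s (π t s) s' * V (t+1) s' :=
            Finset.sum_nonneg fun s' _ => mul_nonneg (hP0 _ _ _) (hVb s').1
          linarith [hR0 s (π t s)]
        · have h4 : ∑ s' : S, P s (π t s) s' * V (t+1) s' ≤ (n : ℝ) := by
            calc ∑ s' : S, P s (π t s) s' * V (t+1) s'
                ≤ ∑ s' : S, P s (π t s) s' * (n : ℝ) :=
                  Finset.sum_le_sum fun s' _ =>
                    mul_le_mul_of_nonneg_left (hVb s').2 (hP0 _ _ _)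
              _ = (n : ℝ) := by rw [← Finset.sum_mul, hP1]; ring
          push_cast
          linarith [hR1 s (π t s)]
      · rw [hV t htmem, hVbar t htmem]
        exact hQle s (π t s)
  constructor
  · intro t htmem s a
    obtain ⟨h1t, htH⟩ := Finset.mem_Icc.mp htmem
    obtain ⟨hVb, hVle⟩ := key (H - t) (t + 1) (by omega) (by omega)
    have hnH : ((H - t : ℕ) : ℝ) ≤ (H : ℝ) := by exact_mod_cast Nat.sub_le H t
    exact hQgen t htmem (fun s => (hVb s).1) (fun s => le_trans (hVb s).2 hnH) hVle s a
  · intro t htmem s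
    obtain ⟨h1t, htH⟩ := Finset.mem_Icc.mp htmem
    exact (key (H + 1 - t) t (by omega) h1t).2 s
end

section
/- Suppose the confidence condition holds. Then for every deterministic time-dependent policy π, every t ∈ {1,…,H}, and all (s,a) ∈ S × A, the optimistic evaluation is an upper bound on the true Q-function: Q̂^π_t(s,a) ≥ Q^π_t(s,a), and consequently V̂^π_t(s) ≥ V^π_t(s) for all t ∈ {1,…,H+1} and s ∈ S. -/
/-- Under the confidence condition, the optimistic policy evaluation (value iteration
for policy evaluation with reward `R̂ + b` and estimated transitions `P̂`) is an upper
bound on the true Q-function of the policy: `Q̂^π_t(s,a) ≥ Q^π_t(s,a)` for all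
`t ∈ {1,…,H}` and `(s,a)`, and consequently `V̂^π_t(s) ≥ V^π_t(s)` for all
`t ∈ {1,…,H+1}` and `s`. -/
theorem optimistic_evaluation_upper_bound
    {S A : Type*} [Fintype S] [Fintype A]
    (P : S → A → S → ℝ) (R : S → A → ℝ) (H : ℕ)
    (hP0 : ∀ s a s', 0 ≤ P s a s')
    (hP1 : ∀ s a, ∑ s' : S, P s a s' = 1)
    (hR0 : ∀ s a, 0 ≤ R s a) (hR1 : ∀ s a, R s a ≤ 1)
    (Phat : S → A → S → ℝ)
    (hPhat0 : ∀ s a s', 0 ≤ Phat s a s')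
    (hPhat1 : ∀ s a, ∑ s' : S, Phat s a s' = 1)
    (Rhat : S → A → ℝ) (b : S → A → ℝ)
    (hconf : ∀ s a,
      |Rhat s a - R s a| + H * ∑ s' : S, |Phat s a s' - P s a s'| ≤ b s a)
    (π : ℕ → S → A)
    (Q : ℕ → S → A → ℝ) (V : ℕ → S → ℝ)
    (hVend : ∀ s, V (H + 1) s = 0)
    (hQ : ∀ t ∈ Finset.Icc 1 H, ∀ s a,
      Q t s a = R s a + ∑ s' : S, P s a s' * V (t + 1) s')
    (hV : ∀ t ∈ Finset.Icc 1 H, ∀ s, V t s = Q t s (π t s))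
    (Qhat : ℕ → S → A → ℝ) (Vhat : ℕ → S → ℝ)
    (hVhatEnd : ∀ s, Vhat (H + 1) s = 0)
    (hQhat : ∀ t ∈ Finset.Icc 1 H, ∀ s a,
      Qhat t s a = Rhat s a + b s a + ∑ s' : S, Phat s a s' * Vhat (t + 1) s')
    (hVhat : ∀ t ∈ Finset.Icc 1 H, ∀ s, Vhat t s = Qhat t s (π t s)) :
    (∀ t ∈ Finset.Icc 1 H, ∀ s a, Qhat t s a ≥ Q t s a) ∧
      (∀ t ∈ Finset.Icc 1 (H + 1), ∀ s, Vhat t s ≥ V t s) := by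
  -- key: backward induction on d = H+1-t
  have qstep : ∀ t, 1 ≤ t → t ≤ H →
      (∀ s, 0 ≤ V (t+1) s ∧ V (t+1) s ≤ (H:ℝ)) →
      (∀ s, V (t+1) s ≤ Vhat (t+1) s) →
      ∀ s a, Q t s a ≤ Qhat t s a := by
    intro t ht1 htH hVb hVle s a
    have htmem : t ∈ Finset.Icc 1 H := Finset.mem_Icc.mpr ⟨ht1, htH⟩
    rw [hQ t htmem, hQhat t htmem]
    have h1 : ∑ s' : S, P s a s' * V (t+1) s'
        ≤ (∑ s' : S, Phat s a s' * Vhat (t+1) s')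
          + (H:ℝ) * ∑ s' : S, |Phat s a s' - P s a s'| := by
      have : ∀ s' ∈ Finset.univ (α := S),
          P s a s' * V (t+1) s'
            ≤ Phat s a s' * Vhat (t+1) s' + (H:ℝ) * |Phat s a s' - P s a s'| := by
        intro s' _
        have hv0 := (hVb s').1
        have hvH := (hVb s').2
        have hvle := hVle s'
        have h2 : Phat s a s' * V (t+1) s' ≤ Phat s a s' * Vhat (t+1) s' :=
          mul_le_mul_of_nonneg_left hvle (hPhat0 s a s')
        have h3 : (P s a s' - Phat s a s') * V (t+1) s'
            ≤ |Phat s a s' - P s a s'| * (H:ℝ) := by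
          have habs : P s a s' - Phat s a s' ≤ |Phat s a s' - P s a s'| := by
            rw [abs_sub_comm]; exact le_abs_self _
          calc (P s a s' - Phat s a s') * V (t+1) s'
              ≤ |Phat s a s' - P s a s'| * V (t+1) s' :=
                mul_le_mul_of_nonneg_right habs hv0
            _ ≤ |Phat s a s' - P s a s'| * (H:ℝ) :=
                mul_le_mul_of_nonneg_left hvH (abs_nonneg _)
        nlinarith
      calc ∑ s' : S, P s a s' * V (t+1) s'
          ≤ ∑ s' : S, (Phat s a s' * Vhat (t+1) s' + (H:ℝ) * |Phat s a s' - P s a s'|) :=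
            Finset.sum_le_sum this
        _ = (∑ s' : S, Phat s a s' * Vhat (t+1) s')
            + (H:ℝ) * ∑ s' : S, |Phat s a s' - P s a s'| := by
            rw [Finset.sum_add_distrib, Finset.mul_sum]
    have hR : R s a - Rhat s a ≤ |Rhat s a - R s a| := by
      rw [abs_sub_comm]; exact le_abs_self _
    have hc := hconf s a
    linarith
  have key : ∀ d t, t + d = H + 1 → 1 ≤ t →
      ∀ s, (0 ≤ V t s ∧ V t s ≤ (d:ℝ)) ∧ V t s ≤ Vhat t s := by
    intro d
    induction d with
    | zero =>
      intro t ht _ s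
      have : t = H + 1 := by omega
      subst this
      simp [hVend, hVhatEnd]
    | succ d ih =>
      intro t ht ht1 s
      have htH : t ≤ H := by omega
      have htmem : t ∈ Finset.Icc 1 H := Finset.mem_Icc.mpr ⟨ht1, htH⟩
      have ih' := ih (t+1) (by omega) (by omega)
      have hdH : (d:ℝ) ≤ (H:ℝ) := by exact_mod_cast Nat.le_of_lt_succ (by omega)
      have hVb : ∀ s', 0 ≤ V (t+1) s' ∧ V (t+1) s' ≤ (H:ℝ) := fun s' =>
        ⟨(ih' s').1.1, le_trans (ih' s').1.2 hdH⟩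
      have hVle : ∀ s', V (t+1) s' ≤ Vhat (t+1) s' := fun s' => (ih' s').2
      constructor
      · rw [hV t htmem, hQ t htmem s (π t s)]
        constructor
        · have : ∀ s' ∈ Finset.univ (α := S), (0:ℝ) ≤ P s (π t s) s' * V (t+1) s' :=
            fun s' _ => mul_nonneg (hP0 _ _ _) (hVb s').1
          have := Finset.sum_nonneg this
          have := hR0 s (π t s)
          linarith
        · have hs : ∑ s' : S, P s (π t s) s' * V (t+1) s'
              ≤ ∑ s' : S, P s (π t s) s' * (d:ℝ) :=
            Finset.sum_le_sum fun s' _ =>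
              mul_le_mul_of_nonneg_left (ih' s').1.2 (hP0 _ _ _)
          rw [← Finset.sum_mul, hP1, one_mul] at hs
          have := hR1 s (π t s)
          push_cast
          linarith
      · rw [hV t htmem, hVhat t htmem]
        exact qstep t ht1 htH hVb hVle s (π t s)
  constructor
  · intro t htmem s a
    obtain ⟨ht1, htH⟩ := Finset.mem_Icc.mp htmem
    have ih' := key (H - t) (t+1) (by omega) (by omega)
    have hdH : ((H - t : ℕ):ℝ) ≤ (H:ℝ) := by exact_mod_cast Nat.sub_le H t
    exact qstep t ht1 htH
      (fun s' => ⟨(ih' s').1.1, le_trans (ih' s').1.2 hdH⟩)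
      (fun s' => (ih' s').2) s a
  · intro t htmem s
    obtain ⟨ht1, htH⟩ := Finset.mem_Icc.mp htmem
    exact (key (H + 1 - t) t (by omega) ht1 s).2
end

section
/- Suppose the confidence condition holds. Then optimistic value iteration is optimistic with respect to the true optimal values: for all t ∈ {1,…,H} and all (s,a) ∈ S × A, Q̂*_t(s,a) ≥ Q*_t(s,a), and V̂*_t(s) ≥ V*_t(s) for all t ∈ {1,…,H+1} and s ∈ S. -/
/-- Under the confidence condition, optimistic value iteration is optimistic with
respect to the true optimal values: `Q̂*_t(s,a) ≥ Q*_t(s,a)` for all `t ∈ {1,…,H}`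
and `(s,a)`, and `V̂*_t(s) ≥ V*_t(s)` for all `t ∈ {1,…,H+1}` and `s`. -/
theorem optimistic_value_iteration_optimism
    {S A : Type*} [Fintype S] [Fintype A] [Nonempty A]
    (P : S → A → S → ℝ) (R : S → A → ℝ) (H : ℕ)
    (hP0 : ∀ s a s', 0 ≤ P s a s')
    (hP1 : ∀ s a, ∑ s' : S, P s a s' = 1)
    (hR0 : ∀ s a, 0 ≤ R s a) (hR1 : ∀ s a, R s a ≤ 1)
    (Phat : S → A → S → ℝ)
    (hPhat0 : ∀ s a s', 0 ≤ Phat s a s')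
    (hPhat1 : ∀ s a, ∑ s' : S, Phat s a s' = 1)
    (Rhat : S → A → ℝ) (b : S → A → ℝ)
    (hconf : ∀ s a,
      |Rhat s a - R s a| + H * ∑ s' : S, |Phat s a s' - P s a s'| ≤ b s a)
    (Qstar : ℕ → S → A → ℝ) (Vstar : ℕ → S → ℝ)
    (hVstarEnd : ∀ s, Vstar (H + 1) s = 0)
    (hQstar : ∀ t ∈ Finset.Icc 1 H, ∀ s a,
      Qstar t s a = R s a + ∑ s' : S, P s a s' * Vstar (t + 1) s')
    (hVstar : ∀ t ∈ Finset.Icc 1 H, ∀ s,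
      Vstar t s = Finset.univ.sup' Finset.univ_nonempty (fun a => Qstar t s a))
    (Qhat : ℕ → S → A → ℝ) (Vhat : ℕ → S → ℝ)
    (hVhatEnd : ∀ s, Vhat (H + 1) s = 0)
    (hQhat : ∀ t ∈ Finset.Icc 1 H, ∀ s a,
      Qhat t s a = Rhat s a + b s a + ∑ s' : S, Phat s a s' * Vhat (t + 1) s')
    (hVhat : ∀ t ∈ Finset.Icc 1 H, ∀ s,
      Vhat t s = Finset.univ.sup' Finset.univ_nonempty (fun a => Qhat t s a)) :
    (∀ t ∈ Finset.Icc 1 H, ∀ s a, Qhat t s a ≥ Qstar t s a) ∧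
      (∀ t ∈ Finset.Icc 1 (H + 1), ∀ s, Vhat t s ≥ Vstar t s) := by
  -- main induction: for t with t + d = H + 1, 1 ≤ t,
  -- Vstar t is in [0, H+1-t] and Vhat t ≥ Vstar t
  have main : ∀ d : ℕ, ∀ t : ℕ, t + d = H + 1 → 1 ≤ t →
      (∀ s, 0 ≤ Vstar t s ∧ Vstar t s ≤ (H + 1 - t : ℕ)) ∧
      (∀ s, Vhat t s ≥ Vstar t s) := by
    intro d
    induction d with
    | zero =>
      intro t ht _
      simp only [Nat.add_zero] at ht
      subst ht
      constructor
      · intro s; rw [hVstarEnd s]; simp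
      · intro s; rw [hVstarEnd s, hVhatEnd s]
    | succ d ih =>
      intro t ht ht1
      have htH : t ≤ H := by omega
      have htIcc : t ∈ Finset.Icc 1 H := Finset.mem_Icc.mpr ⟨ht1, htH⟩
      have hnext : (t + 1) + d = H + 1 := by omega
      obtain ⟨hVb, hVge⟩ := ih (t + 1) hnext (by omega)
      have hdH : (d : ℝ) ≤ H := by exact_mod_cast (by omega : d ≤ H)
      have hcast : ((H + 1 - (t+1) : ℕ) : ℝ) = (d : ℝ) := by
        congr 1; omega
      -- bound on Vstar (t+1): 0 ≤ · ≤ H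
      have hV0 : ∀ s', 0 ≤ Vstar (t+1) s' := fun s' => (hVb s').1
      have hVH : ∀ s', Vstar (t+1) s' ≤ (H : ℝ) := by
        intro s'
        have := (hVb s').2
        rw [hcast] at this
        linarith
      -- Q comparison at level t
      have hQ : ∀ s a, Qhat t s a ≥ Qstar t s a := by
        intro s a
        rw [hQhat t htIcc s a, hQstar t htIcc s a]
        have h1 : ∑ s' : S, Phat s a s' * Vstar (t+1) s'
            ≤ ∑ s' : S, Phat s a s' * Vhat (t+1) s' := by
          apply Finset.sum_le_sum
          intro s' _
          exact mul_le_mul_of_nonneg_left (hVge s') (hPhat0 s a s')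
        have h2 : ∑ s' : S, (P s a s' - Phat s a s') * Vstar (t+1) s'
            ≤ ∑ s' : S, |Phat s a s' - P s a s'| * (H : ℝ) := by
          apply Finset.sum_le_sum
          intro s' _
          calc (P s a s' - Phat s a s') * Vstar (t+1) s'
              ≤ |(P s a s' - Phat s a s') * Vstar (t+1) s'| := le_abs_self _
            _ = |P s a s' - Phat s a s'| * |Vstar (t+1) s'| := abs_mul _ _
            _ ≤ |Phat s a s' - P s a s'| * (H : ℝ) := by
                rw [abs_sub_comm]
                apply mul_le_mul_of_nonneg_left _ (abs_nonneg _)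
                rw [abs_of_nonneg (hV0 s')]
                exact hVH s'
        have h3 := hconf s a
        have h4 : -(Rhat s a - R s a) ≤ |Rhat s a - R s a| := neg_le_abs _
        have h5 : ∑ s' : S, |Phat s a s' - P s a s'| * (H : ℝ)
            = (H : ℝ) * ∑ s' : S, |Phat s a s' - P s a s'| := by
          rw [Finset.mul_sum]; exact Finset.sum_congr rfl fun _ _ => mul_comm _ _
        have h6 : ∑ s' : S, (P s a s' - Phat s a s') * Vstar (t+1) s'
            = ∑ s' : S, P s a s' * Vstar (t+1) s'
              - ∑ s' : S, Phat s a s' * Vstar (t+1) s' := by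
          rw [← Finset.sum_sub_distrib]
          congr 1; ext s'; ring
        rw [h6, h5] at h2
        linarith
      -- V bounds at level t
      refine ⟨?_, ?_⟩
      · intro s
        rw [hVstar t htIcc s]
        constructor
        · obtain ⟨a⟩ := ‹Nonempty A›
          refine le_trans ?_ (Finset.le_sup' _ (Finset.mem_univ a))
          rw [hQstar t htIcc s a]
          have : 0 ≤ ∑ s' : S, P s a s' * Vstar (t+1) s' :=
            Finset.sum_nonneg fun s' _ => mul_nonneg (hP0 s a s') (hV0 s')
          linarith [hR0 s a]
        · apply Finset.sup'_le
          intro a _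
          rw [hQstar t htIcc s a]
          have hd : ((H + 1 - t : ℕ) : ℝ) = (d : ℝ) + 1 := by
            push_cast [show H + 1 - t = d + 1 by omega]; ring
          have : ∑ s' : S, P s a s' * Vstar (t+1) s'
              ≤ ∑ s' : S, P s a s' * (d : ℝ) := by
            apply Finset.sum_le_sum
            intro s' _
            apply mul_le_mul_of_nonneg_left _ (hP0 s a s')
            have := (hVb s').2; rwa [hcast] at this
          rw [← Finset.sum_mul, hP1 s a, one_mul] at this
          rw [hd]
          linarith [hR1 s a]
      · intro s
        rw [hVstar t htIcc s, hVhat t htIcc s]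
        apply Finset.sup'_le
        intro a _
        exact le_trans (hQ s a) (Finset.le_sup' _ (Finset.mem_univ a))
  constructor
  · intro t htIcc s a
    rw [Finset.mem_Icc] at htIcc
    obtain ⟨h1, h2⟩ := htIcc
    -- redo the Q argument using main at t+1
    obtain ⟨hVb, hVge⟩ := main (H - t) (t + 1) (by omega) (by omega)
    have hcast : ((H + 1 - (t+1) : ℕ) : ℝ) ≤ (H : ℝ) := by
      exact_mod_cast (by omega : H + 1 - (t+1) ≤ H)
    have hV0 : ∀ s', 0 ≤ Vstar (t+1) s' := fun s' => (hVb s').1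
    have hVH : ∀ s', Vstar (t+1) s' ≤ (H : ℝ) := fun s' =>
      le_trans (hVb s').2 hcast
    have htIcc' : t ∈ Finset.Icc 1 H := Finset.mem_Icc.mpr ⟨h1, h2⟩
    rw [hQhat t htIcc' s a, hQstar t htIcc' s a]
    have h1' : ∑ s' : S, Phat s a s' * Vstar (t+1) s'
        ≤ ∑ s' : S, Phat s a s' * Vhat (t+1) s' := by
      apply Finset.sum_le_sum
      intro s' _
      exact mul_le_mul_of_nonneg_left (hVge s') (hPhat0 s a s')
    have h2' : ∑ s' : S, (P s a s' - Phat s a s') * Vstar (t+1) s'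
        ≤ ∑ s' : S, |Phat s a s' - P s a s'| * (H : ℝ) := by
      apply Finset.sum_le_sum
      intro s' _
      calc (P s a s' - Phat s a s') * Vstar (t+1) s'
          ≤ |(P s a s' - Phat s a s') * Vstar (t+1) s'| := le_abs_self _
        _ = |P s a s' - Phat s a s'| * |Vstar (t+1) s'| := abs_mul _ _
        _ ≤ |Phat s a s' - P s a s'| * (H : ℝ) := by
            rw [abs_sub_comm]
            apply mul_le_mul_of_nonneg_left _ (abs_nonneg _)
            rw [abs_of_nonneg (hV0 s')]
            exact hVH s'
    have h3 := hconf s a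
    have h4 : -(Rhat s a - R s a) ≤ |Rhat s a - R s a| := neg_le_abs _
    have h5 : ∑ s' : S, |Phat s a s' - P s a s'| * (H : ℝ)
        = (H : ℝ) * ∑ s' : S, |Phat s a s' - P s a s'| := by
      rw [Finset.mul_sum]; exact Finset.sum_congr rfl fun _ _ => mul_comm _ _
    have h6 : ∑ s' : S, (P s a s' - Phat s a s') * Vstar (t+1) s'
        = ∑ s' : S, P s a s' * Vstar (t+1) s'
          - ∑ s' : S, Phat s a s' * Vstar (t+1) s' := by
      rw [← Finset.sum_sub_distrib]
      congr 1; ext s'; ring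
    rw [h6, h5] at h2'
    linarith
  · intro t htIcc s
    rw [Finset.mem_Icc] at htIcc
    exact (main (H + 1 - t) t (by omega) htIcc.1).2 s
end

section
/- Suppose the confidence condition holds, and let π̄ be any greedy policy of pessimistic value iteration, i.e. π̄_t(s) ∈ argmax_{a∈A} Q̄*_t(s,a) for all t, s. Then the pessimistic values lower-bound the true values of π̄: for all t ∈ {1,…,H+1} and s ∈ S, V̄*_t(s) ≤ V^{π̄}_t(s). -/
/-- Under the confidence condition, if `π̄` is a greedy policy of pessimistic value
iteration (i.e. `π̄_t(s)` attains the maximum of `Q̄*_t(s,·)`), then the pessimistic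
values lower-bound the true values of `π̄`: `V̄*_t(s) ≤ V^{π̄}_t(s)` for all
`t ∈ {1,…,H+1}` and `s ∈ S`. -/
theorem pessimistic_value_iteration_lower_bounds_greedy_policy
    {S A : Type*} [Fintype S] [Fintype A] [Nonempty A]
    (P : S → A → S → ℝ) (R : S → A → ℝ) (H : ℕ)
    (hP0 : ∀ s a s', 0 ≤ P s a s')
    (hP1 : ∀ s a, ∑ s' : S, P s a s' = 1)
    (hR0 : ∀ s a, 0 ≤ R s a) (hR1 : ∀ s a, R s a ≤ 1)
    (Phat : S → A → S → ℝ)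
    (hPhat0 : ∀ s a s', 0 ≤ Phat s a s')
    (hPhat1 : ∀ s a, ∑ s' : S, Phat s a s' = 1)
    (Rhat : S → A → ℝ) (b : S → A → ℝ)
    (hconf : ∀ s a,
      |Rhat s a - R s a| + H * ∑ s' : S, |Phat s a s' - P s a s'| ≤ b s a)
    (Qbar : ℕ → S → A → ℝ) (Vbar : ℕ → S → ℝ)
    (hVbarEnd : ∀ s, Vbar (H + 1) s = 0)
    (hQbar : ∀ t ∈ Finset.Icc 1 H, ∀ s a,
      Qbar t s a = Rhat s a - b s a + ∑ s' : S, Phat s a s' * Vbar (t + 1) s')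
    (hVbar : ∀ t ∈ Finset.Icc 1 H, ∀ s,
      Vbar t s = Finset.univ.sup' Finset.univ_nonempty (fun a => Qbar t s a))
    (πbar : ℕ → S → A)
    (hgreedy : ∀ t ∈ Finset.Icc 1 H, ∀ s, Qbar t s (πbar t s) = Vbar t s)
    (Qpi : ℕ → S → A → ℝ) (Vpi : ℕ → S → ℝ)
    (hVpiEnd : ∀ s, Vpi (H + 1) s = 0)
    (hQpi : ∀ t ∈ Finset.Icc 1 H, ∀ s a,
      Qpi t s a = R s a + ∑ s' : S, P s a s' * Vpi (t + 1) s')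
    (hVpi : ∀ t ∈ Finset.Icc 1 H, ∀ s, Vpi t s = Qpi t s (πbar t s)) :
    ∀ t ∈ Finset.Icc 1 (H + 1), ∀ s, Vbar t s ≤ Vpi t s := by

  -- bounds on Vpi: 0 ≤ Vpi t s ≤ k where t + k = H + 1
  have hVpiB : ∀ k t, t + k = H + 1 → 1 ≤ t → ∀ s, 0 ≤ Vpi t s ∧ Vpi t s ≤ (k : ℝ) := by
    intro k
    induction k with
    | zero =>
      intro t ht h1 s
      have : t = H + 1 := by omega
      simp [this, hVpiEnd]
    | succ k ih =>
      intro t ht h1 s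
      have htH : t ∈ Finset.Icc 1 H := by simp [Finset.mem_Icc]; omega
      have ih' := ih (t + 1) (by omega) (by omega)
      rw [hVpi t htH s, hQpi t htH s _]
      constructor
      · have h0 : 0 ≤ ∑ s' : S, P s (πbar t s) s' * Vpi (t + 1) s' :=
          Finset.sum_nonneg fun s' _ => mul_nonneg (hP0 _ _ _) (ih' s').1
        have := hR0 s (πbar t s); linarith
      · have hsum : ∑ s' : S, P s (πbar t s) s' * Vpi (t + 1) s'
            ≤ ∑ s' : S, P s (πbar t s) s' * (k : ℝ) :=
          Finset.sum_le_sum fun s' _ => mul_le_mul_of_nonneg_left (ih' s').2 (hP0 _ _ _)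
        have heq : ∑ s' : S, P s (πbar t s) s' * (k : ℝ) = (k : ℝ) := by
          rw [← Finset.sum_mul, hP1]; ring
        have hr := hR1 s (πbar t s)
        push_cast
        linarith
  have main : ∀ k t, t + k = H + 1 → 1 ≤ t → ∀ s, Vbar t s ≤ Vpi t s := by
    intro k
    induction k with
    | zero =>
      intro t ht h1 s
      have : t = H + 1 := by omega
      simp [this, hVbarEnd, hVpiEnd]
    | succ k ih =>
      intro t ht h1 s
      have htH : t ∈ Finset.Icc 1 H := by simp [Finset.mem_Icc]; omega
      have ihV := hVpiB (k) (t + 1) (by omega) (by omega)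
      have hkH : (k : ℝ) ≤ (H : ℝ) := by exact_mod_cast Nat.le_of_lt_succ (by omega)
      set a := πbar t s with ha
      rw [← hgreedy t htH s, hVpi t htH s, hQbar t htH s a, hQpi t htH s a]
      have step1 : ∑ s' : S, Phat s a s' * Vbar (t + 1) s'
          ≤ ∑ s' : S, Phat s a s' * Vpi (t + 1) s' :=
        Finset.sum_le_sum fun s' _ =>
          mul_le_mul_of_nonneg_left (ih (t + 1) (by omega) (by omega) s') (hPhat0 _ _ _)
      have step2 : ∑ s' : S, (Phat s a s' - P s a s') * Vpi (t + 1) s'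
          ≤ ∑ s' : S, |Phat s a s' - P s a s'| * (H : ℝ) := by
        refine Finset.sum_le_sum fun s' _ => ?_
        calc (Phat s a s' - P s a s') * Vpi (t + 1) s'
            ≤ |Phat s a s' - P s a s'| * Vpi (t + 1) s' :=
              mul_le_mul_of_nonneg_right (le_abs_self _) (ihV s').1
          _ ≤ |Phat s a s' - P s a s'| * (H : ℝ) :=
              mul_le_mul_of_nonneg_left (le_trans (ihV s').2 hkH) (abs_nonneg _)
      have hsplit : ∑ s' : S, (Phat s a s' - P s a s') * Vpi (t + 1) s'
          = (∑ s' : S, Phat s a s' * Vpi (t + 1) s') - ∑ s' : S, P s a s' * Vpi (t + 1) s' := by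
        rw [← Finset.sum_sub_distrib]; congr 1; ext s'; ring
      have hmul : ∑ s' : S, |Phat s a s' - P s a s'| * (H : ℝ)
          = (H : ℝ) * ∑ s' : S, |Phat s a s' - P s a s'| := by
        rw [Finset.mul_sum]; congr 1; ext s'; ring
      have hc := hconf s a
      have habs : Rhat s a - R s a ≤ |Rhat s a - R s a| := le_abs_self _
      rw [hsplit] at step2
      rw [hmul] at step2
      linarith
  intro t ht s
  simp only [Finset.mem_Icc] at ht
  exact main (H + 1 - t) t (by omega) ht.1 s
end

section
/- Suppose b(s,a) ≥ 0 for all (s,a) ∈ S × A, and let π̄ be any greedy policy of pessimistic value iteration, i.e. π̄_t(s) ∈ argmax_{a∈A} Q̄*_t(s,a) for all t, s. Then the optimistic evaluation of π̄ dominates the pessimistic Q-values: for all t ∈ {1,…,H}, s ∈ S, and a ∈ A, V̂^{π̄}_t(s) ≥ Q̄*_t(s,a). -/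
/-- If the bonus is nonnegative and `π̄` is a greedy policy of pessimistic value
iteration, then the optimistic evaluation of `π̄` dominates the pessimistic Q-values:
`V̂^{π̄}_t(s) ≥ Q̄*_t(s,a)` for all `t ∈ {1,…,H}`, `s ∈ S`, `a ∈ A`. -/
theorem optimistic_evaluation_dominates_pessimistic
    {S A : Type*} [Fintype S] [Fintype A] [Nonempty A]
    (Phat : S → A → S → ℝ)
    (hPhat0 : ∀ s a s', 0 ≤ Phat s a s')
    (hPhat1 : ∀ s a, ∑ s' : S, Phat s a s' = 1)
    (Rhat : S → A → ℝ) (b : S → A → ℝ) (H : ℕ)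
    (hb : ∀ s a, 0 ≤ b s a)
    (Qbar : ℕ → S → A → ℝ) (Vbar : ℕ → S → ℝ)
    (hVbarEnd : ∀ s, Vbar (H + 1) s = 0)
    (hQbar : ∀ t ∈ Finset.Icc 1 H, ∀ s a,
      Qbar t s a = Rhat s a - b s a + ∑ s' : S, Phat s a s' * Vbar (t + 1) s')
    (hVbar : ∀ t ∈ Finset.Icc 1 H, ∀ s,
      Vbar t s = Finset.univ.sup' Finset.univ_nonempty (fun a => Qbar t s a))
    (πbar : ℕ → S → A)
    (hgreedy : ∀ t ∈ Finset.Icc 1 H, ∀ s, Qbar t s (πbar t s) = Vbar t s)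
    (Qhat : ℕ → S → A → ℝ) (Vhat : ℕ → S → ℝ)
    (hVhatEnd : ∀ s, Vhat (H + 1) s = 0)
    (hQhat : ∀ t ∈ Finset.Icc 1 H, ∀ s a,
      Qhat t s a = Rhat s a + b s a + ∑ s' : S, Phat s a s' * Vhat (t + 1) s')
    (hVhat : ∀ t ∈ Finset.Icc 1 H, ∀ s, Vhat t s = Qhat t s (πbar t s)) :
    ∀ t ∈ Finset.Icc 1 H, ∀ s a, Vhat t s ≥ Qbar t s a := by
  have key : ∀ k t, t + k = H + 1 → 1 ≤ t → ∀ s, Vhat t s ≥ Vbar t s := by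
    intro k
    induction k with
    | zero =>
      intro t ht _ s
      simp only [Nat.add_zero] at ht
      subst ht
      rw [hVhatEnd, hVbarEnd]
    | succ n ih =>
      intro t ht h1 s
      have htIcc : t ∈ Finset.Icc 1 H := by
        simp only [Finset.mem_Icc]
        omega
      have hVb : Vhat (t + 1) ≥ Vbar (t + 1) := by
        intro s'
        rcases Nat.eq_or_lt_of_le (show t + 1 ≤ H + 1 by omega) with h | h
        · rw [h, hVhatEnd, hVbarEnd]
        · exact ih (t + 1) (by omega) (by omega) s'
      calc Vhat t s = Qhat t s (πbar t s) := hVhat t htIcc s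
        _ = Rhat s (πbar t s) + b s (πbar t s)
              + ∑ s' : S, Phat s (πbar t s) s' * Vhat (t + 1) s' := hQhat t htIcc s _
        _ ≥ Rhat s (πbar t s) - b s (πbar t s)
              + ∑ s' : S, Phat s (πbar t s) s' * Vbar (t + 1) s' := by
            gcongr with s' _
            · linarith [hb s (πbar t s)]
            · exact hPhat0 s _ s'
            · exact hVb s'
        _ = Qbar t s (πbar t s) := (hQbar t htIcc s _).symm
        _ = Vbar t s := hgreedy t htIcc s
  intro t ht s a
  have h1 : 1 ≤ t := (Finset.mem_Icc.mp ht).1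
  have h2 : t ≤ H := (Finset.mem_Icc.mp ht).2
  have h3 : Vhat t s ≥ Vbar t s := key (H + 1 - t) t (by omega) h1 s
  have h4 : Vbar t s ≥ Qbar t s a := by
    rw [hVbar t ht s]
    exact Finset.le_sup' _ (Finset.mem_univ a)
  linarith
end

section
/- Let ι be a finite set and f : ι → ℕ. Then ∑_{i∈ι} ∑_{n=1}^{f(i)} 1/√n ≤ 2·√(|ι| · ∑_{i∈ι} f(i)). -/
lemma inner_sum_le (N : ℕ) :
    ∑ n ∈ Finset.Icc 1 N, (1 : ℝ) / Real.sqrt n ≤ 2 * Real.sqrt N := by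
  induction N with
  | zero => simp
  | succ N ih =>
    rw [Finset.sum_Icc_succ_top (by omega), Nat.cast_succ]
    have ha : Real.sqrt N * Real.sqrt N = N := Real.mul_self_sqrt (by positivity)
    have hb : Real.sqrt (N + 1) * Real.sqrt (N + 1) = (N : ℝ) + 1 :=
      Real.mul_self_sqrt (by positivity)
    have hbpos : (0 : ℝ) < Real.sqrt (N + 1) := Real.sqrt_pos.2 (by positivity)
    have hanneg : (0 : ℝ) ≤ Real.sqrt N := Real.sqrt_nonneg _
    have key : (1 : ℝ) / Real.sqrt (N + 1) + 2 * Real.sqrt N ≤ 2 * Real.sqrt (N + 1) := by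
      rw [div_add' _ _ _ hbpos.ne', div_le_iff₀ hbpos]
      nlinarith [sq_nonneg (Real.sqrt (N + 1) - Real.sqrt N)]
    have : ((N : ℝ) + 1) = ((N + 1 : ℕ) : ℝ) := by push_cast; ring
    linarith

/-- For a finite index set `ι` and visit counts `f : ι → ℕ`,
`∑_{i ∈ ι} ∑_{n=1}^{f(i)} 1/√n ≤ 2·√(|ι| · ∑_{i∈ι} f(i))`. -/
theorem sum_inv_sqrt_le
    {ι : Type*} [Fintype ι] (f : ι → ℕ) :
    ∑ i : ι, ∑ n ∈ Finset.Icc 1 (f i), (1 : ℝ) / Real.sqrt n ≤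
      2 * Real.sqrt ((Fintype.card ι : ℝ) * ∑ i : ι, (f i : ℝ)) := by
  have h1 : ∑ i : ι, ∑ n ∈ Finset.Icc 1 (f i), (1 : ℝ) / Real.sqrt n
      ≤ ∑ i : ι, 2 * Real.sqrt (f i) :=
    Finset.sum_le_sum fun i _ => inner_sum_le (f i)
  have h2 : ∑ i : ι, Real.sqrt (f i) ≤ Real.sqrt ((Fintype.card ι : ℝ) * ∑ i : ι, (f i : ℝ)) := by
    rw [Real.le_sqrt (by positivity) (by positivity)]
    calc (∑ i : ι, Real.sqrt (f i)) ^ 2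
        ≤ (Finset.univ.card : ℝ) * ∑ i : ι, Real.sqrt (f i) ^ 2 :=
          sq_sum_le_card_mul_sum_sq
      _ = (Fintype.card ι : ℝ) * ∑ i : ι, (f i : ℝ) := by
          rw [Finset.card_univ]
          congr 1
          exact Finset.sum_congr rfl fun i _ => Real.sq_sqrt (by positivity)
  calc ∑ i : ι, ∑ n ∈ Finset.Icc 1 (f i), (1 : ℝ) / Real.sqrt n
      ≤ ∑ i : ι, 2 * Real.sqrt (f i) := h1
    _ = 2 * ∑ i : ι, Real.sqrt (f i) := by rw [Finset.mul_sum]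
    _ ≤ 2 * Real.sqrt ((Fintype.card ι : ℝ) * ∑ i : ι, (f i : ℝ)) := by linarith
end
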